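/- Let L > 0 and let u = (f, g) ∈ H¹(T_L) be such that f is constant on the circle, f ≡ c > 0. Then Q(u) ≤ 1; equivalently, c⁶L ≤ (c²L + ∫₀^∞ g²)² · ∫₀^∞ (g′)², regardless of the specific form of g on the half-line. -/

import Mathlib

open MeasureTheory Real Set

noncomputable section

/-- `f ∈ H¹(0,L)` with weak derivative `f'`. -/
def IsH1Interval (L : ℝ) (f f' : ℝ → ℝ) : Prop :=
  (∀ x ∈ Icc (0:ℝ) L, f x = f 0 + ∫ t in (0:ℝ)..x, f' t) ∧
  IntervalIntegrable f' volume 0 L ∧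
  IntervalIntegrable (fun x => f' x ^ 2) volume 0 L

/-- `g ∈ H¹(0,∞)` with weak derivative `g'`. -/
def IsH1Half (g g' : ℝ → ℝ) : Prop :=
  (∀ x : ℝ, 0 ≤ x → g x = g 0 + ∫ t in (0:ℝ)..x, g' t) ∧
  MemLp g 2 (volume.restrict (Ioi 0)) ∧ MemLp g' 2 (volume.restrict (Ioi 0))

/-- `u = (f,g) ∈ H¹(T_L)`: an `H¹` function on the tadpole graph `T_L`, given
by `f ∈ H¹(0,L)` on the circle of length `L` and `g ∈ H¹(0,∞)` on the
half-line, glued by the continuity condition `f(0) = f(L) = g(0)`. -/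
def TadpoleH1 (L : ℝ) (f f' g g' : ℝ → ℝ) : Prop :=
  IsH1Interval L f f' ∧ IsH1Half g g' ∧ f 0 = f L ∧ f L = g 0

/-- The squared `L²` norm `‖u‖₂²` on the tadpole graph. -/
def tadMass (L : ℝ) (f g : ℝ → ℝ) : ℝ :=
  (∫ x in (0:ℝ)..L, f x ^ 2) + ∫ x in Ioi (0:ℝ), g x ^ 2

/-- The squared `L²` norm of the derivative `‖u'‖₂²` on the tadpole graph. -/
def tadKin (L : ℝ) (f' g' : ℝ → ℝ) : ℝ :=
  (∫ x in (0:ℝ)..L, f' x ^ 2) + ∫ x in Ioi (0:ℝ), g' x ^ 2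

/-- The `L⁶` norm (to the sixth power) on the compact core `K` (the circle). -/
def tadSix (L : ℝ) (f : ℝ → ℝ) : ℝ :=
  ∫ x in (0:ℝ)..L, f x ^ 6

/-- The reduced Gagliardo–Nirenberg quotient `Q(u) = ‖u‖_{6,K}⁶/(‖u‖₂⁴‖u'‖₂²)`. -/
def tadQ (L : ℝ) (f f' g g' : ℝ → ℝ) : ℝ :=
  tadSix L f / (tadMass L f g ^ 2 * tadKin L f' g')

/-- `u ≢ 0` on the tadpole graph. -/
def tadNonzero (L : ℝ) (f g : ℝ → ℝ) : Prop :=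
  (∃ x ∈ Icc (0:ℝ) L, f x ≠ 0) ∨ (∃ x : ℝ, 0 ≤ x ∧ g x ≠ 0)

/-- The sharp constant `C_K(T_L)` of the reduced Gagliardo–Nirenberg
inequality on the tadpole graph. -/
def tadCK (L : ℝ) : ℝ :=
  sSup {q : ℝ | ∃ f f' g g' : ℝ → ℝ,
    TadpoleH1 L f f' g g' ∧ tadNonzero L f g ∧ q = tadQ L f f' g g'}

/-- primitive -/
def prim (h : ℝ → ℝ) (x : ℝ) : ℝ := ∫ t in Ioc (0:ℝ) x, h t

lemma symm_sq (h : ℝ → ℝ) (T : ℝ) (hT : 0 < T)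
    (hInt : IntegrableOn h (Ioc 0 T)) :
    ∫ x in Ioc (0:ℝ) T, prim h x * h x = prim h T ^ 2 / 2 := by
  have hIntμ : Integrable h (volume.restrict (Ioc (0:ℝ) T)) := hInt
  -- continuity & boundedness of prim h
  have hFcont : ContinuousOn (prim h) (Icc 0 T) := by
    apply intervalIntegral.continuousOn_primitive
    rwa [integrableOn_Icc_iff_integrableOn_Ioc]
  have hFaem : AEStronglyMeasurable (prim h) (volume.restrict (Ioc (0:ℝ) T)) :=
    (hFcont.aestronglyMeasurable measurableSet_Icc).mono_measure
      (Measure.restrict_mono Ioc_subset_Icc_self le_rfl)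
  have hFbound : ∀ x ∈ Ioc (0:ℝ) T, ‖prim h x‖ ≤ ∫ t in Ioc (0:ℝ) T, ‖h t‖ := by
    intro x hx
    calc ‖prim h x‖ ≤ ∫ t in Ioc (0:ℝ) x, ‖h t‖ := norm_integral_le_integral_norm _
    _ ≤ ∫ t in Ioc (0:ℝ) T, ‖h t‖ := by
        apply setIntegral_mono_set hInt.norm
        · exact Filter.Eventually.of_forall fun t => norm_nonneg _
        · exact HasSubset.Subset.eventuallyLE (Ioc_subset_Ioc le_rfl hx.2)
  have hFh : Integrable (fun t => prim h t * h t) (volume.restrict (Ioc (0:ℝ) T)) := by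
    refine Integrable.mono' (hIntμ.norm.const_mul (∫ t in Ioc (0:ℝ) T, ‖h t‖)) ?_ ?_
    · exact hFaem.mul hIntμ.1
    filter_upwards [ae_restrict_mem measurableSet_Ioc] with t ht
    rw [norm_mul]
    exact mul_le_mul_of_nonneg_right (hFbound t ht) (norm_nonneg _)
  -- Fubini
  have hΦ : Integrable (fun p : ℝ × ℝ => if p.2 ≤ p.1 then h p.1 * h p.2 else 0)
      ((volume.restrict (Ioc (0:ℝ) T)).prod (volume.restrict (Ioc (0:ℝ) T))) := by
    have h1 : Integrable (fun p : ℝ × ℝ => h p.1 * h p.2)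
        ((volume.restrict (Ioc (0:ℝ) T)).prod (volume.restrict (Ioc (0:ℝ) T))) :=
      hIntμ.mul_prod hIntμ
    have h2 := h1.indicator (measurableSet_le measurable_snd measurable_fst)
    apply h2.congr
    filter_upwards with p
    by_cases hp : p.2 ≤ p.1 <;> simp [Set.indicator_apply, hp]
  have hswap := integral_integral_swap
    (f := fun x t => if t ≤ x then h x * h t else 0)
    (μ := volume.restrict (Ioc (0:ℝ) T)) (ν := volume.restrict (Ioc (0:ℝ) T)) hΦ
  -- inner integral, LHS form
  have hinner1 : ∀ x : ℝ,
      (∫ t in Ioc (0:ℝ) T, (if t ≤ x then h x * h t else 0))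
        = h x * prim h (min T x) := by
    intro x
    have he : (fun t => if t ≤ x then h x * h t else 0)
        = (Iic x).indicator (fun t => h x * h t) := by
      ext t; simp [Set.indicator_apply]
    rw [he, integral_indicator measurableSet_Iic,
      Measure.restrict_restrict measurableSet_Iic,
      Set.inter_comm (Iic x) (Ioc (0:ℝ) T), Set.Ioc_inter_Iic, integral_const_mul]
    rfl
  have hinner2 : ∀ t ∈ Ioc (0:ℝ) T,
      (∫ x in Ioc (0:ℝ) T, (if t ≤ x then h x * h t else 0))
        = (prim h T - prim h t) * h t := by
    intro t ht
    have he : (fun x => if t ≤ x then h x * h t else 0)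
        = (Ici t).indicator (fun x => h x * h t) := by
      ext x; simp [Set.indicator_apply]
    rw [he, integral_indicator measurableSet_Ici,
      Measure.restrict_restrict measurableSet_Ici, integral_mul_const]
    have hset : Ici t ∩ Ioc (0:ℝ) T = Icc t T := by
      ext y
      simp only [mem_inter_iff, mem_Ici, mem_Ioc, mem_Icc]
      exact ⟨fun ⟨h1, _, h3⟩ => ⟨h1, h3⟩, fun ⟨h1, h2⟩ => ⟨h1, lt_of_lt_of_le ht.1 h1, h2⟩⟩
    rw [hset, integral_Icc_eq_integral_Ioc]
    have hsplit : prim h T = prim h t + ∫ x in Ioc t T, h x := by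
      unfold prim
      rw [← setIntegral_union (Ioc_disjoint_Ioc_of_le le_rfl) measurableSet_Ioc
        (hInt.mono_set (Ioc_subset_Ioc_right ht.2))
        (hInt.mono_set (Ioc_subset_Ioc_left ht.1.le)),
        Set.Ioc_union_Ioc_eq_Ioc ht.1.le ht.2]
    rw [show (∫ x in Ioc t T, h x) = prim h T - prim h t by rw [hsplit]; ring]
  -- the key identity
  have key : (∫ x in Ioc (0:ℝ) T, prim h x * h x)
      = ∫ t in Ioc (0:ℝ) T, (prim h T - prim h t) * h t := by
    have e1 : (∫ x in Ioc (0:ℝ) T, prim h x * h x)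
        = ∫ x in Ioc (0:ℝ) T, ∫ t in Ioc (0:ℝ) T, (if t ≤ x then h x * h t else 0) := by
      apply setIntegral_congr_fun measurableSet_Ioc
      intro x hx
      dsimp only
      rw [hinner1 x, min_eq_right hx.2, mul_comm]
    have e2 : (∫ t in Ioc (0:ℝ) T, (prim h T - prim h t) * h t)
        = ∫ t in Ioc (0:ℝ) T, ∫ x in Ioc (0:ℝ) T, (if t ≤ x then h x * h t else 0) := by
      apply setIntegral_congr_fun measurableSet_Ioc
      intro t ht
      dsimp only
      rw [hinner2 t ht]
    rw [e1, e2]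
    exact hswap
  have hsub : Integrable (fun t => (prim h T - prim h t) * h t)
      (volume.restrict (Ioc (0:ℝ) T)) := by
    have he : (fun t => (prim h T - prim h t) * h t)
        = fun t => prim h T * h t - prim h t * h t := by funext t; ring
    rw [he]; exact (hIntμ.const_mul (prim h T)).sub hFh
  have hsum : (∫ x in Ioc (0:ℝ) T, prim h x * h x)
      + (∫ t in Ioc (0:ℝ) T, (prim h T - prim h t) * h t) = prim h T * prim h T := by
    rw [← integral_add hFh hsub]
    have he : (fun t => prim h t * h t + (prim h T - prim h t) * h t)
        = fun t => prim h T * h t := by funext t; ring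
    rw [he, integral_const_mul]
    rfl
  have := key
  nlinarith [hsum, key]

lemma sq_eq (c : ℝ) (g g' : ℝ → ℝ)
    (hrep : ∀ x : ℝ, 0 ≤ x → g x = c + ∫ t in (0:ℝ)..x, g' t)
    (T : ℝ) (hT : 0 < T)
    (hg' : IntegrableOn g' (Ioc 0 T))
    (hgg' : IntegrableOn (fun t => g t * g' t) (Ioc 0 T)) :
    g T ^ 2 = c ^ 2 + 2 * ∫ t in Ioc (0:ℝ) T, g t * g' t := by
  have hrep' : ∀ x : ℝ, 0 ≤ x → g x = c + prim g' x := by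
    intro x hx
    rw [hrep x hx]
    congr 1
    exact intervalIntegral.integral_of_le hx
  have hFg' : IntegrableOn (fun t => prim g' t * g' t) (Ioc 0 T) := by
    apply Integrable.congr (hgg'.sub (hg'.const_mul c))
    filter_upwards [ae_restrict_mem measurableSet_Ioc] with t ht
    dsimp only [Pi.sub_apply]
    rw [hrep' t ht.1.le]; ring
  have hsplit : ∫ t in Ioc (0:ℝ) T, g t * g' t = c * prim g' T + prim g' T ^ 2 / 2 := by
    have h1 : ∫ t in Ioc (0:ℝ) T, g t * g' t
        = ∫ t in Ioc (0:ℝ) T, (c * g' t + prim g' t * g' t) := by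
      apply setIntegral_congr_fun measurableSet_Ioc
      intro t ht
      dsimp only
      rw [hrep' t ht.1.le]; ring
    rw [h1, integral_add (hg'.const_mul c) hFg', integral_const_mul,
      symm_sq g' T hT hg']
    rfl
  rw [hrep' T hT.le, hsplit]; ring

lemma trace_ineq (c : ℝ) (hc : 0 < c) (g g' : ℝ → ℝ)
    (hrep : ∀ x : ℝ, 0 ≤ x → g x = c + ∫ t in (0:ℝ)..x, g' t)
    (hg : MemLp g 2 (volume.restrict (Ioi 0)))
    (hg' : MemLp g' 2 (volume.restrict (Ioi 0))) :
    c ^ 4 ≤ 4 * (∫ x in Ioi (0:ℝ), g x ^ 2) * (∫ x in Ioi (0:ℝ), g' x ^ 2) ∧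
    0 < (∫ x in Ioi (0:ℝ), g x ^ 2) ∧ 0 < ∫ x in Ioi (0:ℝ), g' x ^ 2 := by
  set M := ∫ x in Ioi (0:ℝ), g x ^ 2 with hMdef
  set K := ∫ x in Ioi (0:ℝ), g' x ^ 2 with hKdef
  have hg2 : IntegrableOn (fun x => g x ^ 2) (Ioi 0) := hg.integrable_sq
  have hg'2 : IntegrableOn (fun x => g' x ^ 2) (Ioi 0) := hg'.integrable_sq
  have hM0 : 0 ≤ M := setIntegral_nonneg measurableSet_Ioi fun x _ => sq_nonneg _
  have hK0 : 0 ≤ K := setIntegral_nonneg measurableSet_Ioi fun x _ => sq_nonneg _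
  have hgg' : IntegrableOn (fun x => g x * g' x) (Ioi 0) := by
    refine Integrable.mono' ((hg2.add hg'2).div_const 2) ?_ ?_
    · exact hg.1.mul hg'.1
    · filter_upwards with x
      rw [Real.norm_eq_abs]
      simp only [Pi.add_apply]
      rcases abs_cases (g x * g' x) with ⟨he, _⟩ | ⟨he, _⟩ <;> rw [he] <;>
        nlinarith [sq_nonneg (g x - g' x), sq_nonneg (g x + g' x)]
  have hg'loc : ∀ T : ℝ, IntegrableOn g' (Ioc 0 T) := by
    intro T
    have h1 : MemLp g' 2 (volume.restrict (Ioc 0 T)) := by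
      have h2 := hg'.restrict (Ioc (0:ℝ) T)
      rwa [Measure.restrict_restrict measurableSet_Ioc,
        Set.inter_eq_self_of_subset_left Ioc_subset_Ioi_self] at h2
    have : IsFiniteMeasure (volume.restrict (Ioc (0:ℝ) T)) :=
      ⟨by rw [Measure.restrict_apply_univ]; exact measure_Ioc_lt_top⟩
    exact h1.integrable one_le_two
  -- the key estimate
  have key : ∀ ε : ℝ, 0 < ε → c ^ 2 ≤ ε * M + ε⁻¹ * K := by
    intro ε hε
    apply le_of_forall_pos_le_add
    intro δ hδ
    -- find T with g T ^ 2 < δ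
    have hex : ∃ T : ℝ, 0 < T ∧ g T ^ 2 < δ := by
      by_contra hcon
      push_neg at hcon
      set R := (M + 1) / δ with hRdef
      have hR : 0 < R := by positivity
      have h1 : δ * (volume (Ioc (0:ℝ) R)).toReal ≤ ∫ x in Ioc (0:ℝ) R, g x ^ 2 :=
        setIntegral_ge_of_const_le_real measurableSet_Ioc measure_Ioc_lt_top.ne
          (fun x hx => hcon x hx.1) (hg2.mono_set Ioc_subset_Ioi_self)
      have h2 : ∫ x in Ioc (0:ℝ) R, g x ^ 2 ≤ M := by
        apply setIntegral_mono_set hg2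
        · exact Filter.Eventually.of_forall fun x => sq_nonneg _
        · exact HasSubset.Subset.eventuallyLE Ioc_subset_Ioi_self
      rw [Real.volume_Ioc, sub_zero, ENNReal.toReal_ofReal hR.le] at h1
      have h3 : δ * R = M + 1 := by
        rw [hRdef, mul_div_cancel₀ _ hδ.ne']
      linarith
    obtain ⟨T, hT, hgT⟩ := hex
    have hid := sq_eq c g g' hrep T hT (hg'loc T) (hgg'.mono_set Ioc_subset_Ioi_self)
    have hCS : 2 * |∫ t in Ioc (0:ℝ) T, g t * g' t| ≤ ε * M + ε⁻¹ * K := by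
      have s1 : |∫ t in Ioc (0:ℝ) T, g t * g' t| ≤ ∫ t in Ioc (0:ℝ) T, |g t * g' t| := by
        simpa [Real.norm_eq_abs, abs_mul] using
          norm_integral_le_integral_norm (μ := volume.restrict (Ioc (0:ℝ) T))
            (fun t => g t * g' t)
      have s2 : ∫ t in Ioc (0:ℝ) T, 2 * |g t * g' t|
          ≤ ∫ t in Ioc (0:ℝ) T, (ε * g t ^ 2 + ε⁻¹ * g' t ^ 2) := by
        apply integral_mono
        · exact ((hgg'.mono_set Ioc_subset_Ioi_self).abs.const_mul 2)
        · exact ((hg2.mono_set Ioc_subset_Ioi_self).const_mul ε).add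
            ((hg'2.mono_set Ioc_subset_Ioi_self).const_mul ε⁻¹)
        · intro t
          have hε' : 0 < ε⁻¹ := by positivity
          show 2 * |g t * g' t| ≤ ε * g t ^ 2 + ε⁻¹ * g' t ^ 2
          rcases abs_cases (g t * g' t) with ⟨he, _⟩ | ⟨he, _⟩ <;> rw [he] <;>
            nlinarith [mul_nonneg hε'.le (sq_nonneg (ε * g t - g' t)),
              mul_nonneg hε'.le (sq_nonneg (ε * g t + g' t)),
              mul_inv_cancel₀ hε.ne']
      have s3 : ∫ t in Ioc (0:ℝ) T, (ε * g t ^ 2 + ε⁻¹ * g' t ^ 2)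
          ≤ ∫ t in Ioi (0:ℝ), (ε * g t ^ 2 + ε⁻¹ * g' t ^ 2) := by
        apply setIntegral_mono_set ((hg2.const_mul ε).add (hg'2.const_mul ε⁻¹))
        · refine Filter.Eventually.of_forall fun t => ?_
          show (0:ℝ) ≤ ε * g t ^ 2 + ε⁻¹ * g' t ^ 2
          positivity
        · exact HasSubset.Subset.eventuallyLE Ioc_subset_Ioi_self
      have s4 : ∫ t in Ioi (0:ℝ), (ε * g t ^ 2 + ε⁻¹ * g' t ^ 2) = ε * M + ε⁻¹ * K := by
        rw [integral_add (hg2.const_mul ε) (hg'2.const_mul ε⁻¹), integral_const_mul,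
          integral_const_mul]
      have s5 : ∫ t in Ioc (0:ℝ) T, 2 * |g t * g' t|
          = 2 * ∫ t in Ioc (0:ℝ) T, |g t * g' t| := integral_const_mul 2 _
      linarith
    have habs := le_abs_self (∫ t in Ioc (0:ℝ) T, g t * g' t)
    have hnabs := neg_abs_le (∫ t in Ioc (0:ℝ) T, g t * g' t)
    nlinarith [sq_nonneg (g T)]
  -- positivity of M and K
  have hKpos : 0 < K := by
    rcases hK0.lt_or_eq with h | h
    · exact h
    · exfalso
      have hk := key (c ^ 2 / (2 * M + 2)) (by positivity)
      rw [← h, mul_zero, add_zero, div_mul_eq_mul_div, le_div_iff₀ (by linarith)] at hk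
      nlinarith [mul_pos hc hc]
  have hMpos : 0 < M := by
    rcases hM0.lt_or_eq with h | h
    · exact h
    · exfalso
      have hk := key ((2 * K + 2) / c ^ 2) (by positivity)
      rw [← h, mul_zero, zero_add, inv_div, div_mul_eq_mul_div,
        le_div_iff₀ (by linarith)] at hk
      nlinarith [mul_pos hc hc, mul_pos (mul_pos hc hc) hKpos]
  refine ⟨?_, hMpos, hKpos⟩
  have hk := key (c ^ 2 / (2 * M)) (by positivity)
  rw [div_mul_eq_mul_div, inv_div, div_mul_eq_mul_div] at hk
  have h2M : (0:ℝ) < 2 * M := by linarith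
  rw [div_add_div _ _ h2M.ne' (by positivity : (c:ℝ) ^ 2 ≠ 0), le_div_iff₀ (by positivity)] at hk
  nlinarith [mul_pos hc hc, mul_pos hMpos hKpos]

/-- If `u = (f,g) ∈ H¹(T_L)` is constant, `f ≡ c > 0`, on the circle, then
`Q(u) ≤ 1`; equivalently `c⁶L ≤ (c²L + ∫₀^∞ g²)² ∫₀^∞ (g')²`, regardless of
the specific form of `g` on the half-line. -/
theorem constant_on_core_quotient_le_one (L c : ℝ) (hL : 0 < L) (hc : 0 < c)
    (g g' : ℝ → ℝ) (h : TadpoleH1 L (fun _ => c) (fun _ => 0) g g') :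
    tadQ L (fun _ => c) (fun _ => 0) g g' ≤ 1 ∧
    c ^ 6 * L ≤ (c ^ 2 * L + ∫ x in Ioi (0:ℝ), g x ^ 2) ^ 2 *
      ∫ x in Ioi (0:ℝ), g' x ^ 2 := by
  obtain ⟨-, ⟨hrep0, hgL2, hg'L2⟩, -, hfLg⟩ := h
  have hg0 : g 0 = c := by simpa using hfLg.symm
  have hrep : ∀ x : ℝ, 0 ≤ x → g x = c + ∫ t in (0:ℝ)..x, g' t := by
    intro x hx
    rw [hrep0 x hx, hg0]
  obtain ⟨h4, hMpos, hKpos⟩ := trace_ineq c hc g g' hrep hgL2 hg'L2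
  set M := ∫ x in Ioi (0:ℝ), g x ^ 2 with hMdef
  set K := ∫ x in Ioi (0:ℝ), g' x ^ 2 with hKdef
  have main : c ^ 6 * L ≤ (c ^ 2 * L + M) ^ 2 * K := by
    have h1 : c ^ 2 * L * c ^ 4 ≤ c ^ 2 * L * (4 * M * K) :=
      mul_le_mul_of_nonneg_left h4 (by positivity)
    nlinarith [mul_nonneg (sq_nonneg (c ^ 2 * L - M)) hKpos.le]
  refine ⟨?_, main⟩
  have hsix : tadSix L (fun _ => c) = c ^ 6 * L := by
    simp [tadSix]
    ring
  have hmass : tadMass L (fun _ => c) g = c ^ 2 * L + M := by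
    simp [tadMass, ← hMdef]
    ring
  have hkin : tadKin L (fun _ => 0) g' = K := by
    simp [tadKin, ← hKdef]
  rw [tadQ, hsix, hmass, hkin]
  rw [div_le_one (mul_pos (pow_pos (by nlinarith) 2) hKpos)]
  exact main
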